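/- Assume f satisfies (f0)–(f4). Then there exist a sequence (λ⁺_n) of strictly positive reals and a sequence (λ⁻_n) of strictly negative reals such that |λ⁺_n| → +∞ and |λ⁻_n| → +∞ as n → ∞, and f(λ⁺_n)·λ⁺_n > p_*·F(λ⁺_n) and f(λ⁻_n)·λ⁻_n > p_*·F(λ⁻_n) for every n. (Claim 3 in the proof of Lemma 2.3.) -/

import Mathlib

open Filter Set MeasureTheory

private lemma aux_deriv (q : ℝ) (f F : ℝ → ℝ) (hf : Continuous f)
    (hF : ∀ t : ℝ, F t = ∫ s in (0:ℝ)..t, f s) {x : ℝ} (hx : 0 < x) :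
    HasDerivAt (fun t => F t / t ^ q) ((f x * x - q * F x) / x ^ (q + 1)) x := by
  have hFd : HasDerivAt F (f x) x := by
    have h := (hf.integral_hasStrictDerivAt 0 x).hasDerivAt
    exact h.congr_of_eventuallyEq (Eventually.of_forall fun t => (hF t))
  have hvd : HasDerivAt (fun t : ℝ => t ^ q) (q * x ^ (q - 1)) x :=
    Real.hasDerivAt_rpow_const (Or.inl hx.ne')
  have hxq : (0:ℝ) < x ^ q := Real.rpow_pos_of_pos hx q
  have h := hFd.div hvd hxq.ne'
  convert h using 1
  · rfl
  · rfl
  · rfl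
  have h1 : x ^ (q + 1) = x ^ q * x := by
    rw [Real.rpow_add hx, Real.rpow_one]
  have h2 : x ^ (q - 1) = x ^ q / x := by
    rw [Real.rpow_sub hx, Real.rpow_one]
  rw [h1, h2, sq]
  field_simp

private lemma aux_seq (q : ℝ) (f F : ℝ → ℝ) (hf : Continuous f)
    (hF : ∀ t : ℝ, F t = ∫ s in (0:ℝ)..t, f s)
    (htop : Tendsto (fun t : ℝ => F t / t ^ q) atTop atTop) :
    ∀ n : ℕ, ∃ c : ℝ, (n : ℝ) + 1 < c ∧ q * F c < f c * c := by
  intro n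
  set a : ℝ := (n : ℝ) + 1 with ha
  have ha0 : (0:ℝ) < a := by positivity
  set g : ℝ → ℝ := fun t => F t / t ^ q with hg
  obtain ⟨b, hb⟩ : ∃ b : ℝ, a + 1 ≤ b ∧ g a < g b := by
    have h1 := htop.eventually_gt_atTop (g a)
    have h2 := eventually_ge_atTop (a + 1)
    obtain ⟨b, hb1, hb2⟩ := (h1.and h2).exists
    exact ⟨b, hb2, hb1⟩
  have hab : a < b := by linarith
  have hcont : ContinuousOn g (Icc a b) := fun x hx =>
    (aux_deriv q f F hf hF (lt_of_lt_of_le ha0 hx.1)).continuousAt.continuousWithinAt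
  have hderiv : ∀ x ∈ Ioo a b, HasDerivAt g ((f x * x - q * F x) / x ^ (q + 1)) x :=
    fun x hx => aux_deriv q f F hf hF (lt_trans ha0 hx.1)
  obtain ⟨c, hc, hceq⟩ := exists_hasDerivAt_eq_slope g _ hab hcont hderiv
  have hc0 : 0 < c := lt_trans ha0 hc.1
  have hslope : 0 < (g b - g a) / (b - a) := by
    apply div_pos (by linarith [hb.2]) (by linarith)
  rw [← hceq] at hslope
  have hcq : (0:ℝ) < c ^ (q + 1) := Real.rpow_pos_of_pos hc0 _
  have hnum : 0 < f c * c - q * F c := by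
    by_contra h
    push_neg at h
    have : (f c * c - q * F c) / c ^ (q + 1) ≤ 0 := div_nonpos_of_nonpos_of_nonneg h hcq.le
    linarith
  exact ⟨c, hc.1, by linarith⟩

theorem stmt_3 (N : ℕ) (hN : 3 ≤ N) (p : ℝ) (hp2 : 2 ≤ p) (hpN : p < (N : ℝ))
    (f F Ft : ℝ → ℝ) (hf0 : Continuous f)
    (hF : ∀ t : ℝ, F t = ∫ s in (0:ℝ)..t, f s)
    (hFt : ∀ t : ℝ, Ft t = f t * t - 2 * F t)
    (hf1 : Tendsto (fun t : ℝ => f t / |t| ^ (p + 2 * p / (N : ℝ) - 1)) (nhdsWithin 0 {0}ᶜ) (nhds 0))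
    (hf2 : Tendsto (fun t : ℝ => f t / |t| ^ ((N : ℝ) * p / ((N : ℝ) - p) - 1)) (cocompact ℝ) (nhds 0))
    (hf3 : Tendsto (fun t : ℝ => F t / |t| ^ (p + 2 * p / (N : ℝ))) (cocompact ℝ) atTop)
    (hf4a : StrictAntiOn (fun t : ℝ => Ft t / |t| ^ (p + 2 * p / (N : ℝ))) (Iio 0))
    (hf4b : StrictMonoOn (fun t : ℝ => Ft t / |t| ^ (p + 2 * p / (N : ℝ))) (Ioi 0)) :
    ∃ lamp lamm : ℕ → ℝ,
      (∀ n : ℕ, 0 < lamp n) ∧ (∀ n : ℕ, lamm n < 0) ∧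
      Tendsto (fun n : ℕ => |lamp n|) atTop atTop ∧
      Tendsto (fun n : ℕ => |lamm n|) atTop atTop ∧
      (∀ n : ℕ, f (lamp n) * lamp n > (p + 2 * p / (N : ℝ)) * F (lamp n)) ∧
      (∀ n : ℕ, f (lamm n) * lamm n > (p + 2 * p / (N : ℝ)) * F (lamm n)) := by
  set q : ℝ := p + 2 * p / (N : ℝ) with hq
  -- positive side
  have htopP : Tendsto (fun t : ℝ => F t / t ^ q) atTop atTop := by
    have h1 : Tendsto (fun t : ℝ => F t / |t| ^ q) atTop atTop :=
      hf3.mono_left (atTop_le_cocompact)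
    refine h1.congr' ?_
    filter_upwards [eventually_gt_atTop (0:ℝ)] with t ht
    rw [abs_of_pos ht]
  obtain ⟨lamp, hlamp⟩ := Classical.axiomOfChoice (aux_seq q f F hf0 hF htopP)
  -- negative side : use f̂ s = -f (-s), F̂ t = F (-t)
  set fn : ℝ → ℝ := fun s => -f (-s) with hfn
  set Fn : ℝ → ℝ := fun t => F (-t) with hFn
  have hfnc : Continuous fn := (hf0.comp continuous_neg).neg
  have hFnI : ∀ t : ℝ, Fn t = ∫ s in (0:ℝ)..t, fn s := by
    intro t
    have : (∫ s in (0:ℝ)..t, fn s) = -∫ s in (0:ℝ)..t, f (-s) := by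
      simp [hfn, intervalIntegral.integral_neg]
    rw [this, intervalIntegral.integral_comp_neg fun s => f s]
    rw [← intervalIntegral.integral_symm]
    simp [hFn, hF (-t)]
  have htopN : Tendsto (fun t : ℝ => Fn t / t ^ q) atTop atTop := by
    have hneg : Tendsto (fun t : ℝ => -t) atTop (cocompact ℝ) :=
      tendsto_neg_atTop_atBot.mono_right atBot_le_cocompact
    have h1 : Tendsto (fun t : ℝ => F (-t) / |(-t)| ^ q) atTop atTop := hf3.comp hneg
    refine h1.congr' ?_
    filter_upwards [eventually_gt_atTop (0:ℝ)] with t ht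
    simp only [abs_neg]
    rw [abs_of_pos ht]
  obtain ⟨lamc, hlamc⟩ := Classical.axiomOfChoice (aux_seq q fn Fn hfnc hFnI htopN)
  refine ⟨lamp, fun n => -lamc n, ?_, ?_, ?_, ?_, ?_, ?_⟩
  · intro n; have := (hlamp n).1; have hn : (0:ℝ) ≤ n := Nat.cast_nonneg n; linarith
  · intro n; have := (hlamc n).1; have hn : (0:ℝ) ≤ n := Nat.cast_nonneg n
    show -lamc n < 0; linarith
  · apply tendsto_atTop_mono (fun n => ?_) (tendsto_natCast_atTop_atTop (R := ℝ))
    have h := (hlamp n).1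
    have hn : (0:ℝ) ≤ n := Nat.cast_nonneg n
    rw [abs_of_pos (by linarith)]
    linarith
  · apply tendsto_atTop_mono (fun n => ?_) (tendsto_natCast_atTop_atTop (R := ℝ))
    have h := (hlamc n).1
    have hn : (0:ℝ) ≤ n := Nat.cast_nonneg n
    rw [abs_neg, abs_of_pos (by linarith)]
    linarith
  · exact fun n => (hlamp n).2
  · intro n
    have h := (hlamc n).2
    simp only [hfn, hFn] at h
    simpa [mul_comm] using h
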